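/- Let A, ρ̄, F be n_A×n_A complex matrices with A Hermitian, let B be a Hermitian n_B×n_B matrix, and let ρ_s be any n_B×n_B matrix. Define K₁ = −i (F ⊗ B)(ρ̄ ⊗ ρ_s) + i (ρ̄ ⊗ ρ_s)(F† ⊗ B). Then tr_A( −i[ A ⊗ B, K₁ ] ) = −i [ ( tr(Fρ̄A − Aρ̄F†) / (2i) ) B², ρ_s ] + tr( Fρ̄A + Aρ̄F† ) ( B ρ_s B − (1/2)(B² ρ_s + ρ_s B²) ). -/

import Mathlib

open scoped Matrix Kronecker

/-- Partial trace over the first tensor factor: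
`(tr_A M)_{j,j'} = Σ_i M_{(i,j),(i,j')}`. -/
noncomputable def ptraceA {nA nB : ℕ}
    (M : Matrix (Fin nA × Fin nB) (Fin nA × Fin nB) ℂ) :
    Matrix (Fin nB) (Fin nB) ℂ :=
  fun j j' => ∑ i, M (i, j) (i, j')

/-- with `A` Hermitian on `ℂ^{n_A}`, `B` Hermitian on `ℂ^{n_B}`, and
`K₁ = −i (F⊗B)(ρ̄⊗ρ_s) + i (ρ̄⊗ρ_s)(F†⊗B)`, one has
`tr_A(−i[A⊗B, K₁]) = −i[(tr(Fρ̄A − Aρ̄F†)/(2i)) B², ρ_s]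
  + tr(Fρ̄A + Aρ̄F†)(Bρ_sB − (1/2)(B²ρ_s + ρ_sB²))`. -/

lemma ptraceA_add {nA nB : ℕ} (M N : Matrix (Fin nA × Fin nB) (Fin nA × Fin nB) ℂ) :
    ptraceA (M + N) = ptraceA M + ptraceA N := by
  funext j j'; simp [ptraceA, Finset.sum_add_distrib]

lemma ptraceA_sub {nA nB : ℕ} (M N : Matrix (Fin nA × Fin nB) (Fin nA × Fin nB) ℂ) :
    ptraceA (M - N) = ptraceA M - ptraceA N := by
  funext j j'; simp [ptraceA, Finset.sum_sub_distrib]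

lemma ptraceA_smul {nA nB : ℕ} (c : ℂ) (M : Matrix (Fin nA × Fin nB) (Fin nA × Fin nB) ℂ) :
    ptraceA (c • M) = c • ptraceA M := by
  funext j j'; simp [ptraceA, Finset.mul_sum]

lemma ptraceA_kron {nA nB : ℕ} (X : Matrix (Fin nA) (Fin nA) ℂ)
    (Y : Matrix (Fin nB) (Fin nB) ℂ) :
    ptraceA (X ⊗ₖ Y) = X.trace • Y := by
  funext j j'
  simp [ptraceA, Matrix.trace, Matrix.diag, Finset.sum_mul]

theorem stmt11 {nA nB : ℕ}
    (A ρbar F : Matrix (Fin nA) (Fin nA) ℂ) (hA : A.IsHermitian)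
    (B : Matrix (Fin nB) (Fin nB) ℂ) (hB : B.IsHermitian)
    (ρs : Matrix (Fin nB) (Fin nB) ℂ) :
    ptraceA ((-Complex.I) • ((A ⊗ₖ B)
          * ((-Complex.I) • ((F ⊗ₖ B) * (ρbar ⊗ₖ ρs))
            + Complex.I • ((ρbar ⊗ₖ ρs) * (Fᴴ ⊗ₖ B)))
        - ((-Complex.I) • ((F ⊗ₖ B) * (ρbar ⊗ₖ ρs))
            + Complex.I • ((ρbar ⊗ₖ ρs) * (Fᴴ ⊗ₖ B))) * (A ⊗ₖ B)))
      = (-Complex.I) • ((((F * ρbar * A - A * ρbar * Fᴴ).trace / (2 * Complex.I))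
            • (B * B)) * ρs
          - ρs * (((F * ρbar * A - A * ρbar * Fᴴ).trace / (2 * Complex.I)) • (B * B)))
        + (F * ρbar * A + A * ρbar * Fᴴ).trace
            • (B * ρs * B - (1 / 2 : ℂ) • (B * B * ρs + ρs * (B * B))) := by
  simp only [Matrix.smul_mul, Matrix.mul_smul, mul_add, add_mul, smul_add, smul_sub,
    sub_mul, mul_sub, smul_smul, ← Matrix.mul_kronecker_mul]
  simp only [ptraceA_add, ptraceA_sub, ptraceA_smul, ptraceA_kron]
  simp only [Matrix.mul_assoc, Matrix.trace_sub, Matrix.trace_add]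
  have h2 : (A * (F * ρbar)).trace = (F * (ρbar * A)).trace := by
    rw [Matrix.trace_mul_comm, Matrix.mul_assoc]
  have h4 : (ρbar * (Fᴴ * A)).trace = (A * (ρbar * Fᴴ)).trace := by
    rw [← Matrix.mul_assoc, Matrix.trace_mul_comm]
  rw [h2, h4]
  match_scalars <;> field_simp <;> ring_nf <;> simp [Complex.I_sq] <;> ring
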